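/- With k₁ = 0 (accept the first candidate as the first selection), the winning weight satisfies W(N, 0, k₂,…,k_s) = θ^{N−1} · (P_{N−1})! + W(N, k₂,…,k_s). -/

import Mathlib

open Finset

/-- Number of inversions (Kendall tau statistic) of a permutation. -/
def inversions {N : ℕ} (π : Equiv.Perm (Fin N)) : ℕ :=
  (Finset.univ.filter (fun x : Fin N × Fin N => x.1 < x.2 ∧ π x.2 < π x.1)).card

/-- `P_k(θ) = 1 + θ + … + θ^(k-1)`. -/
def mallowsP (θ : ℝ) (k : ℕ) : ℝ := ∑ i ∈ Finset.range k, θ ^ i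

/-- `(P_k)! = P_k · P_(k-1) · … · P_1`. -/
def mallowsPFact (θ : ℝ) (k : ℕ) : ℝ := ∏ j ∈ Finset.range k, mallowsP θ (j + 1)

/-- Positions (0-indexed) selected by the multi-threshold strategy: for each
threshold `k` in the list, the next selection is at the first position `p` with
`p ≥ k` (i.e. the first `k` candidates are rejected), `p ≥ lo` (after the previous
selection), and `p` a left-to-right maximum. -/
def selList {N : ℕ} (π : Equiv.Perm (Fin N)) : List ℕ → ℕ → List (Fin N)
  | [], _ => []
  | k :: ks, lo =>
    let s : Finset (Fin N) := Finset.univ.filter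
      (fun p => max k lo ≤ (p : ℕ) ∧ ∀ q : Fin N, q < p → π q < π p)
    if h : s.Nonempty then s.min' h :: selList π ks ((s.min' h : ℕ) + 1) else []

/-- The strategy wins on `π` if the position holding the largest value is selected. -/
def winnable {N : ℕ} (π : Equiv.Perm (Fin N)) (ks : List ℕ) : Prop :=
  ∃ p ∈ selList π ks 0, ∀ q : Fin N, π q ≤ π p

instance {N : ℕ} (π : Equiv.Perm (Fin N)) (ks : List ℕ) : Decidable (winnable π ks) :=
  inferInstanceAs (Decidable (∃ p ∈ selList π ks 0, ∀ q : Fin N, π q ≤ π p))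

/-- `W(N, k₁, …, k_s) = Σ_(winnable π ∈ S_N) θ^(c(π))`. -/
def winW (θ : ℝ) (N : ℕ) (ks : List ℕ) : ℝ :=
  ∑ π : Equiv.Perm (Fin N), if winnable π ks then θ ^ inversions π else 0

/-- `T_{≤j}(m, k₁, …, k_r)`: weight of permutations of `S_m` on which the strategy
makes at most `j` selections (with `j : ℤ`, so `T_{≤-1} = 0`). -/
def Tle (θ : ℝ) (m : ℕ) (ks : List ℕ) (j : ℤ) : ℝ :=
  ∑ π : Equiv.Perm (Fin m),
    if ((selList π ks 0).length : ℤ) ≤ j then θ ^ inversions π else 0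

/-- `T_j(m, k₁, …, k_r)`: weight of permutations of `S_m` on which the strategy
makes exactly `j` selections. -/
def Texact (θ : ℝ) (m : ℕ) (ks : List ℕ) (j : ℕ) : ℝ :=
  ∑ π : Equiv.Perm (Fin m),
    if (selList π ks 0).length = j then θ ^ inversions π else 0

def mallowsSum (θ : ℝ) (n : ℕ) : ℝ := ∑ σ : Equiv.Perm (Fin n), θ ^ inversions σ

def insMax {n : ℕ} (p : Fin (n+1)) (σ : Equiv.Perm (Fin n)) : Equiv.Perm (Fin (n+1)) :=
  (finSuccEquiv' p).trans ((σ.optionCongr).trans (finSuccEquiv' (Fin.last n)).symm)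

lemma insMax_self {n : ℕ} (p : Fin (n+1)) (σ : Equiv.Perm (Fin n)) :
    insMax p σ p = Fin.last n := by
  simp [insMax, finSuccEquiv'_at, finSuccEquiv'_symm_none]

lemma insMax_succAbove {n : ℕ} (p : Fin (n+1)) (σ : Equiv.Perm (Fin n)) (j : Fin n) :
    insMax p σ (p.succAbove j) = (σ j).castSucc := by
  simp [insMax, finSuccEquiv'_succAbove, finSuccEquiv'_symm_some, Fin.succAbove_last]

lemma inversions_insMax {n : ℕ} (p : Fin (n+1)) (σ : Equiv.Perm (Fin n)) :
    inversions (insMax p σ) = (n - (p : ℕ)) + inversions σ := by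
  classical
  set π := insMax p σ with hπ
  have hkey : (Finset.univ.filter
        (fun x : Fin (n+1) × Fin (n+1) => x.1 < x.2 ∧ π x.2 < π x.1))
      = ((Finset.Ioi p).image (fun y => (p, y))) ∪
        ((Finset.univ.filter (fun x : Fin n × Fin n => x.1 < x.2 ∧ σ x.2 < σ x.1)).image
          (fun x => (p.succAbove x.1, p.succAbove x.2))) := by
    ext ⟨x, y⟩
    simp only [Finset.mem_filter, Finset.mem_union, Finset.mem_image, Finset.mem_Ioi,
      Finset.mem_univ, true_and, Prod.mk.injEq, Prod.exists]
    constructor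
    · rintro ⟨hxy, hlt⟩
      by_cases hx : x = p
      · subst hx
        exact Or.inl ⟨y, hxy, rfl, rfl⟩
      · right
        have hy : y ≠ p := by
          rintro rfl
          rw [insMax_self] at hlt
          exact absurd hlt (not_lt.mpr (Fin.le_last _))
        obtain ⟨i, hi⟩ := Fin.exists_succAbove_eq hx
        obtain ⟨j, hj⟩ := Fin.exists_succAbove_eq hy
        refine ⟨i, j, ⟨?_, ?_⟩, hi, hj⟩
        · rw [← Fin.succAbove_lt_succAbove_iff (p := p)]
          rw [hi, hj]; exact hxy
        · have := hlt
          rw [← hi, ← hj, hπ, insMax_succAbove, insMax_succAbove,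
            Fin.castSucc_lt_castSucc_iff] at this
          exact this
    · rintro (⟨y', hy', rfl, rfl⟩ | ⟨i, j, ⟨hij, hσ⟩, rfl, rfl⟩)
      · refine ⟨hy', ?_⟩
        rw [insMax_self]
        have : π y' ≠ Fin.last n := by
          rw [← insMax_self p σ]
          exact fun h => absurd (π.injective h) (ne_of_gt hy')
        exact Fin.lt_last_iff_ne_last.mpr this
      · refine ⟨Fin.succAbove_lt_succAbove_iff.mpr hij, ?_⟩
        rw [hπ, insMax_succAbove, insMax_succAbove, Fin.castSucc_lt_castSucc_iff]
        exact hσ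
  rw [inversions, hkey, Finset.card_union_of_disjoint, Finset.card_image_of_injective,
    Finset.card_image_of_injective, Fin.card_Ioi, inversions]
  · simp
  · intro a b hab
    simpa [Prod.ext_iff, Fin.succAbove_right_inj] using hab
  · intro a b hab
    simpa [Prod.ext_iff] using hab
  · rw [Finset.disjoint_left]
    rintro ⟨x, y⟩ hx hy
    simp only [Finset.mem_image, Finset.mem_Ioi, Prod.mk.injEq, Prod.exists] at hx hy
    obtain ⟨y', _, rfl, rfl⟩ := hx
    obtain ⟨i, j, _, hip, _⟩ := hy
    exact Fin.succAbove_ne p i hip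

lemma optionCongr_removeNone' {α β : Type*} (e : Option α ≃ Option β) (h : e none = none) :
    (Equiv.removeNone e).optionCongr = e := by
  refine Equiv.ext fun x => ?_
  cases x with
  | none => simp [h]
  | some a =>
    have hex : ∃ b, e (some a) = some b := by
      cases he : e (some a) with
      | none => exact absurd (e.injective (he.trans h.symm)) (by simp)
      | some b => exact ⟨b, rfl⟩
    have h2 := Equiv.removeNone_some e hex
    simp only [Equiv.optionCongr_apply, Option.map_some]
    exact h2

def extractMax {n : ℕ} (p : Fin (n+1)) (π : Equiv.Perm (Fin (n+1))) : Equiv.Perm (Fin n) :=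
  Equiv.removeNone ((finSuccEquiv' p).symm.trans (π.trans (finSuccEquiv' (Fin.last n))))

lemma extractMax_insMax {n : ℕ} (p : Fin (n+1)) (σ : Equiv.Perm (Fin n)) :
    extractMax p (insMax p σ) = σ := by
  have : (finSuccEquiv' p).symm.trans ((insMax p σ).trans (finSuccEquiv' (Fin.last n)))
      = σ.optionCongr := by
    ext x
    simp [insMax]
  rw [extractMax, this, Equiv.removeNone_optionCongr]

lemma insMax_extractMax {n : ℕ} (p : Fin (n+1)) (π : Equiv.Perm (Fin (n+1)))
    (h : π p = Fin.last n) :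
    insMax p (extractMax p π) = π := by
  have hn : ((finSuccEquiv' p).symm.trans (π.trans (finSuccEquiv' (Fin.last n)))) none = none := by
    simp [finSuccEquiv'_symm_none, h, finSuccEquiv'_at]
  have := optionCongr_removeNone' _ hn
  rw [insMax, extractMax, this]
  ext x
  simp

lemma fiber_sum (θ : ℝ) (n : ℕ) (p : Fin (n+1)) :
    (∑ π : Equiv.Perm (Fin (n+1)), if π p = Fin.last n then θ ^ inversions π else 0)
    = θ ^ (n - (p : ℕ)) * mallowsSum θ n := by
  classical
  rw [← Finset.sum_filter, mallowsSum, Finset.mul_sum]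
  refine Finset.sum_bij' (fun π _ => extractMax p π) (fun σ _ => insMax p σ)
    (fun _ _ => Finset.mem_univ _) ?_ ?_ ?_ ?_
  · intro σ _
    exact Finset.mem_filter.mpr ⟨Finset.mem_univ _, insMax_self p σ⟩
  · intro π hπ
    exact insMax_extractMax p π (Finset.mem_filter.mp hπ).2
  · intro σ _
    exact extractMax_insMax p σ
  · intro π hπ
    have h : π = insMax p (extractMax p π) :=
      (insMax_extractMax p π (Finset.mem_filter.mp hπ).2).symm
    rw [← pow_add, ← inversions_insMax, ← h]

lemma mallowsSum_succ (θ : ℝ) (n : ℕ) :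
    mallowsSum θ (n+1) = mallowsP θ (n+1) * mallowsSum θ n := by
  classical
  have h1 : ∀ π : Equiv.Perm (Fin (n+1)),
      θ ^ inversions π = ∑ p : Fin (n+1), if π p = Fin.last n then θ ^ inversions π else 0 := by
    intro π
    have : ∀ p : Fin (n+1), (π p = Fin.last n) ↔ p = π.symm (Fin.last n) := fun p =>
      Equiv.apply_eq_iff_eq_symm_apply π
    simp_rw [this]
    rw [Finset.sum_ite_eq' Finset.univ (π.symm (Fin.last n)) (fun _ => θ ^ inversions π)]
    simp
  calc mallowsSum θ (n+1)
      = ∑ π : Equiv.Perm (Fin (n+1)), ∑ p : Fin (n+1),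
          if π p = Fin.last n then θ ^ inversions π else 0 := by
        rw [mallowsSum]; exact Finset.sum_congr rfl fun π _ => h1 π
    _ = ∑ p : Fin (n+1), ∑ π : Equiv.Perm (Fin (n+1)),
          if π p = Fin.last n then θ ^ inversions π else 0 := Finset.sum_comm
    _ = ∑ p : Fin (n+1), θ ^ (n - (p : ℕ)) * mallowsSum θ n :=
        Finset.sum_congr rfl fun p _ => fiber_sum θ n p
    _ = (∑ p : Fin (n+1), θ ^ (n - (p : ℕ))) * mallowsSum θ n := by rw [Finset.sum_mul]
    _ = mallowsP θ (n+1) * mallowsSum θ n := by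
        congr 1
        rw [Fin.sum_univ_eq_sum_range (fun i => θ ^ (n - i)) (n+1), mallowsP]
        have := Finset.sum_range_reflect (fun i => θ ^ i) (n+1)
        simpa using this

lemma mallowsSum_eq (θ : ℝ) : ∀ n, mallowsSum θ n = mallowsPFact θ n := by
  intro n
  induction n with
  | zero =>
    rw [mallowsSum, mallowsPFact]
    simp [inversions]
  | succ n ih =>
    rw [mallowsSum_succ, ih, mallowsPFact, mallowsPFact, Finset.prod_range_succ, mul_comm]

lemma selList_ge {N : ℕ} (π : Equiv.Perm (Fin N)) :
    ∀ (ks : List ℕ) (lo : ℕ) (p : Fin N), p ∈ selList π ks lo → lo ≤ (p : ℕ) := by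
  intro ks
  induction ks with
  | nil => intro lo p h; simp [selList] at h
  | cons k ks ih =>
    intro lo p h
    simp only [selList] at h
    split at h
    case isTrue hne =>
      have hmin := Finset.min'_mem _ hne
      have hlo : lo ≤ ((Finset.univ.filter
          (fun p : Fin N => max k lo ≤ (p : ℕ) ∧ ∀ q : Fin N, q < p → π q < π p)).min' hne : ℕ) :=
        le_trans (le_max_right k lo) (Finset.mem_filter.mp hmin).2.1
      rcases List.mem_cons.mp h with rfl | h'
      · exact hlo
      · exact le_trans hlo (le_trans (Nat.le_succ _) (ih _ p h'))
    case isFalse => simp at h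

lemma selList_head_ge {N : ℕ} (π : Equiv.Perm (Fin N)) (k : ℕ) (ks : List ℕ) (lo : ℕ)
    (p : Fin N) (h : p ∈ selList π (k :: ks) lo) : k ≤ (p : ℕ) := by
  simp only [selList] at h
  split at h
  case isTrue hne =>
    have hmin := Finset.min'_mem _ hne
    have hk : k ≤ ((Finset.univ.filter
        (fun p : Fin N => max k lo ≤ (p : ℕ) ∧ ∀ q : Fin N, q < p → π q < π p)).min' hne : ℕ) :=
      le_trans (le_max_left k lo) (Finset.mem_filter.mp hmin).2.1
    rcases List.mem_cons.mp h with rfl | h'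
    · exact hk
    · exact le_trans hk (le_trans (Nat.le_succ _) (selList_ge π ks _ p h'))
  case isFalse => simp at h

lemma selList_one_eq_zero {N : ℕ} (π : Equiv.Perm (Fin N)) (ks : List ℕ)
    (h1 : ∀ x ∈ ks, 1 ≤ x) : selList π ks 1 = selList π ks 0 := by
  cases ks with
  | nil => simp [selList]
  | cons k ks =>
    have hk : 1 ≤ k := h1 k (List.mem_cons_self)
    simp only [selList]
    have hmax : max k 1 = max k 0 := by omega
    rw [hmax]

lemma selList_zero_cons {n : ℕ} (π : Equiv.Perm (Fin (n+1))) (ks : List ℕ) :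
    selList π (0 :: ks) 0 = (0 : Fin (n+1)) :: selList π ks 1 := by
  simp only [selList]
  have h0 : (0 : Fin (n+1)) ∈ Finset.univ.filter
      (fun p : Fin (n+1) => max 0 0 ≤ (p : ℕ) ∧ ∀ q : Fin (n+1), q < p → π q < π p) := by
    refine Finset.mem_filter.mpr ⟨Finset.mem_univ _, by simp, fun q hq => absurd hq ?_⟩
    exact Fin.not_lt_zero q
  have hne : (Finset.univ.filter
      (fun p : Fin (n+1) => max 0 0 ≤ (p : ℕ) ∧ ∀ q : Fin (n+1), q < p → π q < π p)).Nonempty :=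
    ⟨0, h0⟩
  rw [dif_pos hne]
  have hmin : (Finset.univ.filter
      (fun p : Fin (n+1) => max 0 0 ≤ (p : ℕ) ∧ ∀ q : Fin (n+1), q < p → π q < π p)).min' hne
      = 0 := le_antisymm (Finset.min'_le _ _ h0) (Fin.zero_le _)
  rw [hmin]
  simp

theorem stmt11 (θ : ℝ) (N : ℕ) (hN : 1 ≤ N) (ks : List ℕ)
    (hsort : ks.Pairwise (· ≤ ·)) (hpos : ∀ x ∈ ks, 1 ≤ x) :
    winW θ N (0 :: ks) = θ ^ (N - 1) * mallowsPFact θ (N - 1) + winW θ N ks := by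
  classical
  obtain ⟨n, rfl⟩ : ∃ n, N = n + 1 := ⟨N - 1, by omega⟩
  have hA : ∀ π : Equiv.Perm (Fin (n+1)),
      winnable π (0 :: ks) ↔ (π 0 = Fin.last n ∨ winnable π ks) := by
    intro π
    unfold winnable
    rw [selList_zero_cons, selList_one_eq_zero _ _ hpos]
    constructor
    · rintro ⟨p, hp, hmax⟩
      rcases List.mem_cons.mp hp with rfl | hp'
      · left
        refine le_antisymm (Fin.le_last _) ?_
        have := hmax (π.symm (Fin.last n))
        rwa [Equiv.apply_symm_apply] at this
      · exact Or.inr ⟨p, hp', hmax⟩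
    · rintro (h | ⟨p, hp, hmax⟩)
      · exact ⟨0, List.mem_cons_self, fun q => h ▸ Fin.le_last _⟩
      · exact ⟨p, List.mem_cons_of_mem _ hp, hmax⟩
  have hdisj : ∀ π : Equiv.Perm (Fin (n+1)), ¬(π 0 = Fin.last n ∧ winnable π ks) := by
    rintro π ⟨h0, p, hp, hmax⟩
    cases ks with
    | nil => simp [selList] at hp
    | cons k ks' =>
      have hk : 1 ≤ k := hpos k (List.mem_cons_self)
      have hkp : k ≤ (p : ℕ) := selList_head_ge π k ks' 0 p hp
      have hlast : π p = Fin.last n := by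
        refine le_antisymm (Fin.le_last _) ?_
        rw [← h0]; exact hmax 0
      have hp0 : p = 0 := π.injective (hlast.trans h0.symm)
      rw [hp0] at hkp
      simp at hkp
      omega
  have split : ∀ π : Equiv.Perm (Fin (n+1)),
      (if winnable π (0 :: ks) then θ ^ inversions π else 0)
      = (if π 0 = Fin.last n then θ ^ inversions π else 0)
        + (if winnable π ks then θ ^ inversions π else 0) := by
    intro π
    by_cases h1 : π 0 = Fin.last n <;> by_cases h2 : winnable π ks
    · exact absurd ⟨h1, h2⟩ (hdisj π)
    all_goals simp [hA π, h1, h2]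
  rw [winW, Finset.sum_congr rfl (fun π _ => split π), Finset.sum_add_distrib]
  rw [fiber_sum θ n 0, mallowsSum_eq, winW]
  simp
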